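/- Let p be a prime with p ≥ 3, let c ∈ ℚ with c ≠ 0, and let f(x) = x^p + c. Then 0 is not a periodic point of f over ℚ, i.e., f^n(0) ≠ 0 for all n ≥ 1. -/

import Mathlib

theorem stmt_12 (p : ℕ) (hp : p.Prime) (hp3 : 3 ≤ p) (c : ℚ) (hc : c ≠ 0) :
    ∀ n : ℕ, 1 ≤ n → (fun x : ℚ => x ^ p + c)^[n] 0 ≠ 0 := by
  have hpodd : Odd p := hp.odd_of_ne_two (by omega)
  have hp0 : p ≠ 0 := by omega
  set f : ℚ → ℚ := fun x => x ^ p + c with hf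
  have hiter1 : f^[1] 0 = c := by simp [hf, zero_pow hp0]
  by_cases hden : c.den = 1
  · -- c is an integer; use a sign/size argument
    have habs : (1 : ℚ) ≤ |c| := by
      have h1 : c = (c.num : ℚ) := by
        conv_lhs => rw [← Rat.num_div_den c]
        rw [hden]; simp
      have hnum : c.num ≠ 0 := Rat.num_ne_zero.mpr hc
      have : (1 : ℤ) ≤ |c.num| := Int.one_le_abs hnum
      rw [h1, ← Int.cast_abs]
      exact_mod_cast this
    rcases le_or_gt 1 c with hcpos | hcneg
    · -- c ≥ 1 : all iterates are ≥ 1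
      have key : ∀ n : ℕ, 1 ≤ n → 1 ≤ f^[n] 0 := by
        intro n hn
        induction n with
        | zero => omega
        | succ m ih =>
          rcases Nat.eq_or_lt_of_le hn with h1 | h1
          · rw [← h1, hiter1]; exact hcpos
          · have hm : 1 ≤ m := by omega
            have hm' := ih hm
            rw [Function.iterate_succ_apply']
            have : 1 ≤ (f^[m] 0) ^ p := one_le_pow₀ hm'
            simp only [hf]
            linarith
      intro n hn
      have := key n hn
      intro h; rw [h] at this; norm_num at this
    · -- c ≤ -1 : all iterates are ≤ -1
      have hcneg' : c ≤ -1 := by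
        rcases abs_cases c with ⟨h1, h2⟩ | ⟨h1, h2⟩
        · linarith
        · linarith
      have key : ∀ n : ℕ, 1 ≤ n → f^[n] 0 ≤ -1 := by
        intro n hn
        induction n with
        | zero => omega
        | succ m ih =>
          rcases Nat.eq_or_lt_of_le hn with h1 | h1
          · rw [← h1, hiter1]; exact hcneg'
          · have hm : 1 ≤ m := by omega
            have hm' := ih hm
            rw [Function.iterate_succ_apply']
            have hmon := (hpodd.strictMono_pow (R := ℚ)).monotone hm'
            have hneg1 : (-1 : ℚ) ^ p = -1 := hpodd.neg_one_pow
            simp only [hf]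
            rw [hneg1] at hmon
            linarith
      intro n hn
      have := key n hn
      intro h; rw [h] at this; norm_num at this
  · -- c is not an integer; the denominator valuation decreases forever
    set q := c.den.minFac with hq
    have hqprime : q.Prime := Nat.minFac_prime hden
    haveI : Fact q.Prime := ⟨hqprime⟩
    have hqdvd : q ∣ c.den := Nat.minFac_dvd _
    have hvc : padicValRat q c < 0 := by
      have hnum : padicValInt q c.num = 0 := by
        apply padicValInt.eq_zero_of_not_dvd
        intro hdvd
        have hq1 : q ∣ c.num.natAbs := Int.natCast_dvd.mp hdvd
        have hgcd : q ∣ Nat.gcd c.num.natAbs c.den := Nat.dvd_gcd hq1 hqdvd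
        rw [Nat.Coprime.gcd_eq_one c.reduced] at hgcd
        exact absurd (Nat.dvd_one.mp hgcd) hqprime.ne_one
      have hden' : 1 ≤ padicValNat q c.den :=
        one_le_padicValNat_of_dvd c.pos.ne' hqdvd
      rw [padicValRat, hnum]
      have : (1 : ℤ) ≤ (padicValNat q c.den : ℤ) := by exact_mod_cast hden'
      omega
    -- main induction: iterates are nonzero with valuation ≤ v(c)
    have key : ∀ n : ℕ, 1 ≤ n →
        f^[n] 0 ≠ 0 ∧ padicValRat q (f^[n] 0) ≤ padicValRat q c := by
      intro n hn
      induction n with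
      | zero => omega
      | succ m ih =>
        rcases Nat.eq_or_lt_of_le hn with h1 | h1
        · rw [← h1, hiter1]; exact ⟨hc, le_refl _⟩
        · have hm : 1 ≤ m := by omega
          obtain ⟨ha, hva⟩ := ih hm
          set a := f^[m] 0 with haa
          have hap : a ^ p ≠ 0 := pow_ne_zero _ ha
          have hvap : padicValRat q (a ^ p) < padicValRat q c := by
            rw [padicValRat.pow a]
            have : (p : ℤ) * padicValRat q a ≤ (p : ℤ) * padicValRat q c :=
              mul_le_mul_of_nonneg_left hva (by positivity)
            have h3 : (3 : ℤ) ≤ (p : ℤ) := by exact_mod_cast hp3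
            nlinarith [hvc]
          have hsum : a ^ p + c ≠ 0 := by
            intro h0
            have : c = -(a ^ p) := by linarith [h0]
            rw [this, padicValRat.neg] at hvap
            exact lt_irrefl _ hvap
          constructor
          · rw [Function.iterate_succ_apply']; exact hsum
          · rw [Function.iterate_succ_apply']
            show padicValRat q (a ^ p + c) ≤ _
            rw [padicValRat.add_eq_of_lt hsum hap hc hvap]
            exact le_of_lt hvap
    intro n hn
    exact (key n hn).1
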